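/- State bound under sequential stability: let {K_t}_{t ≥ t_0} be a sequence of gains that is sequentially stable with parameters (κ, α), and let the state evolve as x_{t+1} = (A + BK_t)x_t + Be_t + w_t for arbitrary sequences e_t ∈ ℝ^m, w_t ∈ ℝ^n. Then for every t > t_0, ‖x_t‖ ≤ κ(1 − α/2)^{t−t_0}‖x_{t_0}‖ + (2κ/α) max_{t_0 ≤ i < t} ‖Be_i + w_i‖. -/

import Mathlib

open Matrix

noncomputable def spNorm {α β : Type*} [Fintype α] [Fintype β] [DecidableEq β]
    (M : Matrix α β ℝ) : ℝ :=
  ‖LinearMap.toContinuousLinearMap (Matrix.toEuclideanLin M)‖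

noncomputable def sigMin {α β : Type*} [Fintype α] [Fintype β] [DecidableEq β]
    (M : Matrix α β ℝ) : ℝ :=
  sInf ((fun x : EuclideanSpace ℝ β =>
    ‖LinearMap.toContinuousLinearMap (Matrix.toEuclideanLin M) x‖) '' {x | ‖x‖ = 1})

noncomputable def frobNorm {α β : Type*} [Fintype α] [Fintype β] (M : Matrix α β ℝ) : ℝ :=
  Real.sqrt (∑ i, ∑ j, (M i j) ^ 2)

noncomputable def frobInner {α β : Type*} [Fintype α] [Fintype β] (X Y : Matrix α β ℝ) : ℝ :=
  (Xᵀ * Y).trace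

noncomputable def vecNorm {α : Type*} [Fintype α] (v : α → ℝ) : ℝ :=
  Real.sqrt (∑ i, (v i) ^ 2)

/-- spectral radius strictly less than one (Schur stability). -/
def IsStable {n : ℕ} (M : Matrix (Fin n) (Fin n) ℝ) : Prop :=
  ∀ μ ∈ spectrum ℂ (M.map (algebraMap ℝ ℂ)), ‖μ‖ < 1

def Controllable {n m : ℕ} (A : Matrix (Fin n) (Fin n) ℝ) (B : Matrix (Fin n) (Fin m) ℝ) :
    Prop :=
  Function.Surjective fun v : Fin n × Fin m → ℝ =>
    Matrix.mulVec (Matrix.of fun i p => (A ^ (p.1 : ℕ) * B) i p.2) v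

noncomputable def dlyap {n : ℕ} (M : Matrix (Fin n) (Fin n) ℝ) :
    Matrix (Fin n) (Fin n) ℝ :=
  ∑' i : ℕ, M ^ i * (M ^ i)ᵀ

noncomputable def dlyapQ {n : ℕ} (M Qc : Matrix (Fin n) (Fin n) ℝ) :
    Matrix (Fin n) (Fin n) ℝ :=
  ∑' i : ℕ, (M ^ i)ᵀ * Qc * M ^ i

noncomputable def SigmaK {n m : ℕ} (A : Matrix (Fin n) (Fin n) ℝ)
    (B : Matrix (Fin n) (Fin m) ℝ) (K : Matrix (Fin m) (Fin n) ℝ) :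
    Matrix (Fin n) (Fin n) ℝ :=
  dlyap (A + B * K)

noncomputable def PmatK {n m : ℕ} (A : Matrix (Fin n) (Fin n) ℝ)
    (B : Matrix (Fin n) (Fin m) ℝ) (Q : Matrix (Fin n) (Fin n) ℝ)
    (R : Matrix (Fin m) (Fin m) ℝ) (K : Matrix (Fin m) (Fin n) ℝ) :
    Matrix (Fin n) (Fin n) ℝ :=
  dlyapQ (A + B * K) (Q + Kᵀ * R * K)

noncomputable def costC {n m : ℕ} (A : Matrix (Fin n) (Fin n) ℝ)
    (B : Matrix (Fin n) (Fin m) ℝ) (Q : Matrix (Fin n) (Fin n) ℝ)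
    (R : Matrix (Fin m) (Fin m) ℝ) (K : Matrix (Fin m) (Fin n) ℝ) : ℝ :=
  ((Q + Kᵀ * R * K) * SigmaK A B K).trace

noncomputable def gradC {n m : ℕ} (A : Matrix (Fin n) (Fin n) ℝ)
    (B : Matrix (Fin n) (Fin m) ℝ) (Q : Matrix (Fin n) (Fin n) ℝ)
    (R : Matrix (Fin m) (Fin m) ℝ) (K : Matrix (Fin m) (Fin n) ℝ) :
    Matrix (Fin m) (Fin n) ℝ :=
  (2 : ℝ) • (((R + Bᵀ * PmatK A B Q R K * B) * K + Bᵀ * PmatK A B Q R K * A) * SigmaK A B K)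

def StronglyStable {n m : ℕ} (A : Matrix (Fin n) (Fin n) ℝ) (B : Matrix (Fin n) (Fin m) ℝ)
    (K : Matrix (Fin m) (Fin n) ℝ) (κ α : ℝ) : Prop :=
  1 ≤ κ ∧ 0 < α ∧ α ≤ 1 ∧
    ∃ H L : Matrix (Fin n) (Fin n) ℝ, H.PosDef ∧
      A + B * K = H * L * H⁻¹ ∧ spNorm L ≤ 1 - α ∧ spNorm H * spNorm H⁻¹ ≤ κ ∧ spNorm K ≤ κ

def SeqStable {n m : ℕ} (A : Matrix (Fin n) (Fin n) ℝ) (B : Matrix (Fin n) (Fin m) ℝ)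
    (K : ℕ → Matrix (Fin m) (Fin n) ℝ) (t0 : ℕ) (κ α : ℝ) : Prop :=
  1 ≤ κ ∧ 0 < α ∧ α ≤ 1 ∧
    ∃ H L : ℕ → Matrix (Fin n) (Fin n) ℝ,
      ∀ t, t0 ≤ t → (H t).PosDef ∧ A + B * K t = H t * L t * (H t)⁻¹ ∧
        spNorm (L t) ≤ 1 - α ∧ spNorm (K t) ≤ κ ∧ spNorm (H t) ≤ κ ∧
        spNorm (H t)⁻¹ ≤ 1 ∧ spNorm ((H (t + 1))⁻¹ * H t) ≤ 1 + α / 2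

noncomputable def D0mat {n m : ℕ} (u : ℕ → Fin m → ℝ) (x : ℕ → Fin n → ℝ) (t : ℕ) :
    Matrix (Fin m ⊕ Fin n) (Fin t) ℝ :=
  Matrix.of fun i j => Sum.elim (fun a => u (j : ℕ) a) (fun b => x (j : ℕ) b) i

noncomputable def X1mat {n : ℕ} (x : ℕ → Fin n → ℝ) (t : ℕ) : Matrix (Fin n) (Fin t) ℝ :=
  Matrix.of fun i j => x ((j : ℕ) + 1) i

noncomputable def W0mat {n : ℕ} (w : ℕ → Fin n → ℝ) (t : ℕ) : Matrix (Fin n) (Fin t) ℝ :=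
  Matrix.of fun i j => w (j : ℕ) i

noncomputable def Phimat {n m : ℕ} (u : ℕ → Fin m → ℝ) (x : ℕ → Fin n → ℝ) (t : ℕ) :
    Matrix (Fin m ⊕ Fin n) (Fin m ⊕ Fin n) ℝ :=
  ((t : ℝ)⁻¹) • (D0mat u x t * (D0mat u x t)ᵀ)

noncomputable def BAhat {n m : ℕ} (u : ℕ → Fin m → ℝ) (x : ℕ → Fin n → ℝ) (t : ℕ) :
    Matrix (Fin n) (Fin m ⊕ Fin n) ℝ :=
  X1mat x t * (D0mat u x t)ᵀ * (D0mat u x t * (D0mat u x t)ᵀ)⁻¹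

noncomputable def Bhat {n m : ℕ} (u : ℕ → Fin m → ℝ) (x : ℕ → Fin n → ℝ) (t : ℕ) :
    Matrix (Fin n) (Fin m) ℝ :=
  Matrix.of fun i j => BAhat u x t i (Sum.inl j)

noncomputable def Ahat {n m : ℕ} (u : ℕ → Fin m → ℝ) (x : ℕ → Fin n → ℝ) (t : ℕ) :
    Matrix (Fin n) (Fin n) ℝ :=
  Matrix.of fun i j => BAhat u x t i (Sum.inr j)

noncomputable def deltaT {n m : ℕ} (w : ℕ → Fin n → ℝ) (u : ℕ → Fin m → ℝ)
    (x : ℕ → Fin n → ℝ) (t : ℕ) : ℝ :=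
  (t : ℝ)⁻¹ * spNorm (W0mat w t * (D0mat u x t)ᵀ)

noncomputable def SNR {n m : ℕ} (γ : ℕ → ℝ) (w : ℕ → Fin n → ℝ) (u : ℕ → Fin m → ℝ)
    (x : ℕ → Fin n → ℝ) (t : ℕ) : ℝ :=
  γ t / deltaT w u x t

lemma vecNorm_eq {α : Type*} [Fintype α] (v : α → ℝ) :
    vecNorm v = ‖(WithLp.equiv 2 (α → ℝ)).symm v‖ := by
  rw [EuclideanSpace.norm_eq]
  simp [vecNorm, Real.norm_eq_abs, sq_abs]

lemma vecNorm_nonneg {α : Type*} [Fintype α] (v : α → ℝ) : 0 ≤ vecNorm v :=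
  Real.sqrt_nonneg _

lemma spNorm_nonneg {α β : Type*} [Fintype α] [Fintype β] [DecidableEq β]
    (M : Matrix α β ℝ) : 0 ≤ spNorm M :=
  norm_nonneg _

lemma vecNorm_add_le {α : Type*} [Fintype α] (u v : α → ℝ) :
    vecNorm (u + v) ≤ vecNorm u + vecNorm v := by
  simp only [vecNorm_eq]
  rw [show (WithLp.equiv 2 (α → ℝ)).symm (u + v)
      = (WithLp.equiv 2 (α → ℝ)).symm u + (WithLp.equiv 2 (α → ℝ)).symm v from rfl]
  exact norm_add_le _ _

lemma vecNorm_mulVec_le {α β : Type*} [Fintype α] [Fintype β] [DecidableEq β]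
    (M : Matrix α β ℝ) (v : β → ℝ) :
    vecNorm (M.mulVec v) ≤ spNorm M * vecNorm v := by
  simp only [vecNorm_eq]
  have h := (LinearMap.toContinuousLinearMap (Matrix.toEuclideanLin M)).le_opNorm
    ((WithLp.equiv 2 (β → ℝ)).symm v)
  simpa [spNorm] using h


/-- state bound under sequential stability. -/
theorem state_bound_of_seq_stable {n m : ℕ}
    (A : Matrix (Fin n) (Fin n) ℝ) (B : Matrix (Fin n) (Fin m) ℝ)
    (t0 : ℕ) (K : ℕ → Matrix (Fin m) (Fin n) ℝ) (κ α : ℝ)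
    (hseq : SeqStable A B K t0 κ α)
    (x : ℕ → Fin n → ℝ) (e : ℕ → Fin m → ℝ) (w : ℕ → Fin n → ℝ)
    (hdyn : ∀ t, t0 ≤ t →
      x (t + 1) = (A + B * K t).mulVec (x t) + B.mulVec (e t) + w t) :
    ∀ t, (ht : t0 < t) →
      vecNorm (x t) ≤ κ * (1 - α / 2) ^ (t - t0) * vecNorm (x t0) +
        (2 * κ / α) * (Finset.Ico t0 t).sup' (Finset.nonempty_Ico.mpr ht)
          (fun i => vecNorm (B.mulVec (e i) + w i)) := by
  obtain ⟨hκ, hα, hα1, H, L, hH⟩ := hseq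
  set z : ℕ → ℝ := fun t => vecNorm ((H t)⁻¹.mulVec (x t)) with hz
  set f : ℕ → ℝ := fun i => vecNorm (B.mulVec (e i) + w i) with hf
  have hz0 : ∀ t, 0 ≤ z t := fun t => vecNorm_nonneg _
  have hf0 : ∀ t, 0 ≤ f t := fun t => vecNorm_nonneg _
  have hβ0 : (0:ℝ) ≤ 1 - α / 2 := by linarith
  -- one-step bound
  have step : ∀ s, t0 ≤ s → z (s + 1) ≤ (1 - α / 2) * z s + f s := by
    intro s hs
    obtain ⟨hPD, hEq, hL, -, -, -, hHH⟩ := hH s hs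
    obtain ⟨-, -, -, -, -, hHinv, -⟩ := hH (s+1) (hs.trans (Nat.le_succ s))
    have hx : (H (s+1))⁻¹.mulVec (x (s+1)) =
        ((H (s+1))⁻¹ * H s).mulVec ((L s).mulVec ((H s)⁻¹.mulVec (x s)))
          + (H (s+1))⁻¹.mulVec (B.mulVec (e s) + w s) := by
      rw [hdyn s hs, hEq, add_assoc, Matrix.mulVec_add]
      congr 1
      simp only [Matrix.mulVec_mulVec, Matrix.mul_assoc]
    have b1 : vecNorm (((H (s+1))⁻¹ * H s).mulVec ((L s).mulVec ((H s)⁻¹.mulVec (x s))))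
        ≤ spNorm ((H (s+1))⁻¹ * H s) * (spNorm (L s) * z s) :=
      le_trans (vecNorm_mulVec_le _ _)
        (mul_le_mul_of_nonneg_left (vecNorm_mulVec_le _ _) (spNorm_nonneg _))
    have b2 : vecNorm ((H (s+1))⁻¹.mulVec (B.mulVec (e s) + w s))
        ≤ spNorm (H (s+1))⁻¹ * f s := vecNorm_mulVec_le _ _
    have c1 : spNorm ((H (s+1))⁻¹ * H s) * (spNorm (L s) * z s)
        ≤ (1 + α/2) * ((1 - α) * z s) :=
      mul_le_mul hHH (mul_le_mul_of_nonneg_right hL (hz0 s))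
        (mul_nonneg (spNorm_nonneg _) (hz0 s)) (by linarith)
    have c2 : spNorm (H (s+1))⁻¹ * f s ≤ 1 * f s :=
      mul_le_mul_of_nonneg_right hHinv (hf0 s)
    have hzx : z (s+1) = vecNorm (((H (s+1))⁻¹ * H s).mulVec ((L s).mulVec ((H s)⁻¹.mulVec (x s)))
          + (H (s+1))⁻¹.mulVec (B.mulVec (e s) + w s)) := congrArg vecNorm hx
    have := le_trans (hzx ▸ vecNorm_add_le _ _)
      (add_le_add (le_trans b1 c1) (le_trans b2 c2))
    nlinarith [mul_nonneg (sq_nonneg α) (hz0 s)]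
  -- induction for z
  have key : ∀ t (h : t0 + 1 ≤ t), z t ≤ (1 - α / 2) ^ (t - t0) * z t0 +
      (2 / α) * (Finset.Ico t0 t).sup' (Finset.nonempty_Ico.mpr h) f := by
    intro t h
    induction t, h using Nat.le_induction with
    | base =>
        have hmem : t0 ∈ Finset.Ico t0 (t0 + 1) := by simp
        have hfS : f t0 ≤ (Finset.Ico t0 (t0+1)).sup' ⟨t0, hmem⟩ f := Finset.le_sup' f hmem
        have hSnn : 0 ≤ (Finset.Ico t0 (t0+1)).sup' ⟨t0, hmem⟩ f := le_trans (hf0 t0) hfS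
        have hst := step t0 le_rfl
        have h2 : z (t0+1) ≤ (1 - α/2) * z t0 +
            (2/α) * (Finset.Ico t0 (t0+1)).sup' ⟨t0, hmem⟩ f := by
          have h1 : (0:ℝ) ≤ 2 / α - 1 := by
            rw [sub_nonneg, le_div_iff₀ hα]; linarith
          nlinarith [mul_nonneg h1 hSnn]
        simpa [Nat.add_sub_cancel_left, pow_one] using h2
    | succ s hs ih =>
        have hts : t0 < s := hs
        set S0 := (Finset.Ico t0 s).sup' (Finset.nonempty_Ico.mpr hts) f with hS0
        set S1 := (Finset.Ico t0 (s+1)).sup'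
          (Finset.nonempty_Ico.mpr (hts.trans (Nat.lt_succ_self s))) f with hS1
        have hmono : S0 ≤ S1 := by
          apply Finset.sup'_le
          intro i hi
          exact Finset.le_sup' f (Finset.mem_Ico.mpr ⟨(Finset.mem_Ico.mp hi).1,
            (Finset.mem_Ico.mp hi).2.trans (Nat.lt_succ_self s)⟩)
        have hfs : f s ≤ S1 := Finset.le_sup' f (Finset.mem_Ico.mpr ⟨hts.le, Nat.lt_succ_self s⟩)
        have hS1nn : 0 ≤ S1 := le_trans (hf0 s) hfs
        have hstep := step s hts.le
        have hpow : (1 - α/2) ^ (s + 1 - t0) = (1 - α/2) * (1 - α/2) ^ (s - t0) := by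
          rw [show s + 1 - t0 = (s - t0) + 1 from by omega, pow_succ]; ring
        have h2α : (0:ℝ) ≤ 2 / α := by positivity
        have hIH := ih
        have step2 : z (s+1) ≤ (1 - α/2) * ((1 - α/2) ^ (s - t0) * z t0 + (2/α) * S1) + S1 := by
          calc z (s+1) ≤ (1 - α/2) * z s + f s := hstep
            _ ≤ (1 - α/2) * ((1 - α/2) ^ (s - t0) * z t0 + (2/α) * S0) + f s :=
                add_le_add_left (mul_le_mul_of_nonneg_left hIH hβ0) _
            _ ≤ (1 - α/2) * ((1 - α/2) ^ (s - t0) * z t0 + (2/α) * S1) + S1 :=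
                add_le_add (mul_le_mul_of_nonneg_left
                  (add_le_add_right (mul_le_mul_of_nonneg_left hmono h2α) _) hβ0) hfs
        rw [hpow]
        have hexp : ((1 - α/2) * (2/α) + 1) * S1 = (2/α) * S1 := by
          field_simp
          ring
        nlinarith [step2, hexp]
  -- conclude
  intro t ht
  obtain ⟨hPDt, -, -, -, hHt, -, -⟩ := hH t ht.le
  obtain ⟨-, -, -, -, -, hH0inv, -⟩ := hH t0 le_rfl
  have hxz : vecNorm (x t) ≤ spNorm (H t) * z t := by
    have hHHinv : H t * (H t)⁻¹ = 1 := Matrix.mul_nonsing_inv _ hPDt.det_pos.ne'.isUnit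
    have hxe : x t = (H t).mulVec ((H t)⁻¹.mulVec (x t)) := by
      rw [Matrix.mulVec_mulVec, hHHinv, Matrix.one_mulVec]
    calc vecNorm (x t) = vecNorm ((H t).mulVec ((H t)⁻¹.mulVec (x t))) := by rw [← hxe]
      _ ≤ spNorm (H t) * z t := vecNorm_mulVec_le _ _
  have hz0t : z t0 ≤ vecNorm (x t0) := by
    calc z t0 ≤ spNorm (H t0)⁻¹ * vecNorm (x t0) := vecNorm_mulVec_le _ _
      _ ≤ 1 * vecNorm (x t0) := mul_le_mul_of_nonneg_right hH0inv (vecNorm_nonneg _)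
      _ = vecNorm (x t0) := one_mul _
  have hkey := key t ht
  set S := (Finset.Ico t0 t).sup' (Finset.nonempty_Ico.mpr ht) f with hSdef
  have hSnn : 0 ≤ S := by
    obtain ⟨i, hi⟩ := Finset.nonempty_Ico.mpr ht
    exact le_trans (hf0 i) (Finset.le_sup' f hi)
  have hpow0 : (0:ℝ) ≤ (1 - α/2) ^ (t - t0) := pow_nonneg hβ0 _
  have h2α : (0:ℝ) ≤ 2 / α := by positivity
  have hκ0 : (0:ℝ) ≤ κ := by linarith
  calc vecNorm (x t) ≤ spNorm (H t) * z t := hxz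
    _ ≤ κ * z t := mul_le_mul_of_nonneg_right hHt (hz0 t)
    _ ≤ κ * ((1 - α/2) ^ (t - t0) * z t0 + (2/α) * S) := mul_le_mul_of_nonneg_left hkey hκ0
    _ ≤ κ * ((1 - α/2) ^ (t - t0) * vecNorm (x t0) + (2/α) * S) :=
        mul_le_mul_of_nonneg_left
          (add_le_add_left (mul_le_mul_of_nonneg_left hz0t hpow0) _) hκ0
    _ = κ * (1 - α/2) ^ (t - t0) * vecNorm (x t0) + (2 * κ / α) * S := by ring
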